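/- For every integer I ≥ 1 and every truth assignment τ : {1,…,I} → {0,1} there exists a function u : ℝ²₊ → ℝ such that: (a) u(z) > u(z') whenever z, z' ∈ ℝ²₊ and z > z' in the componentwise order (z ≥ z' in both coordinates and z ≠ z'); and (b) for every i ∈ {1,…,I}, u(z¹ᵢ) > u(z²ᵢ) if τ(i) = 1, and u(z²ᵢ) > u(z¹ᵢ) if τ(i) = 0. -/

import Mathlib

open Matrix

noncomputable section

/-- The vectors `z¹ᵢ = (i, 1/i)` (for `q = 0`) and `z²ᵢ = (i + 1/2, 1/(i + 1/2))` (for `q = 1`). -/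
def zv (q : Fin 2) (i : ℕ) : Fin 2 → ℝ :=
  if q = 0 then ![(i : ℝ), 1 / (i : ℝ)]
  else ![(i : ℝ) + 1 / 2, 1 / ((i : ℝ) + 1 / 2)]

/-- The price vectors `p¹ᵢ = (1/(2i), i/2)` (for `q = 0`) and
`p²ᵢ = (1/(2i+1), i/2 + 1/4)` (for `q = 1`). -/
def pv (q : Fin 2) (i : ℕ) : Fin 2 → ℝ :=
  if q = 0 then ![1 / (2 * (i : ℝ)), (i : ℝ) / 2]
  else ![1 / (2 * (i : ℝ) + 1), (i : ℝ) / 2 + 1 / 4]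

lemma zv00 (i : ℕ) : zv 0 i 0 = (i : ℝ) := by simp [zv]
lemma zv01 (i : ℕ) : zv 0 i 1 = 1 / (i : ℝ) := by simp [zv]
lemma zv10 (i : ℕ) : zv 1 i 0 = (i : ℝ) + 1/2 := by norm_num [zv]
lemma zv11 (i : ℕ) : zv 1 i 1 = 1 / ((i : ℝ) + 1/2) := by norm_num [zv]

lemma zv_apply0 (q : Fin 2) (i : ℕ) :
    zv q i 0 = (i : ℝ) + (if q = 0 then 0 else 1/2) := by
  fin_cases q <;> norm_num [zv]

lemma nat_cast_dist {i j : ℕ} (h : i ≠ j) : (1:ℝ) ≤ |(i:ℝ) - j| := by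
  rcases h.lt_or_gt with h | h
  · have : (i:ℝ) + 1 ≤ j := by exact_mod_cast h
    rw [abs_sub_comm, abs_of_nonneg (by linarith)]; linarith
  · have : (j:ℝ) + 1 ≤ i := by exact_mod_cast h
    rw [abs_of_nonneg (by linarith)]; linarith

lemma center_dist {q q' : Fin 2} {i j : ℕ} (h : q ≠ q' ∨ i ≠ j) :
    1/2 ≤ |zv q i 0 - zv q' j 0| := by
  rw [zv_apply0, zv_apply0]
  set a : ℝ := if q = 0 then 0 else 1/2 with ha
  set c : ℝ := if q' = 0 then 0 else 1/2 with hc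
  by_cases hij : i = j
  · subst hij
    have hq : q ≠ q' := h.resolve_right (fun hh => hh rfl)
    have : |a - c| = 1/2 := by
      fin_cases q <;> fin_cases q' <;> simp_all <;> norm_num
    rw [show (i:ℝ) + a - ((i:ℝ) + c) = a - c by ring, this]
  · have h1 := nat_cast_dist hij
    have h2 : |c - a| ≤ 1/2 := by
      rw [ha, hc]; split_ifs <;> simp [abs]
    have key : (i:ℝ) - j = (((i:ℝ)+a) - ((j:ℝ)+c)) + (c - a) := by ring
    have h3 := abs_add_le (((i:ℝ)+a) - ((j:ℝ)+c)) (c - a)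
    rw [← key] at h3
    linarith

/-- Center of the `i`-th bump: the point preferred by `τ`. -/
def xc (τ : ℕ → Bool) (i : ℕ) : Fin 2 → ℝ := if τ i then zv 0 i else zv 1 i

/-- ℓ¹ distance to the `i`-th center. -/
def Dd (τ : ℕ → Bool) (i : ℕ) (z : Fin 2 → ℝ) : ℝ :=
  |z 0 - xc τ i 0| + |z 1 - xc τ i 1|

/-- The `i`-th bump function. -/
def bb (L : ℝ) (τ : ℕ → Bool) (i : ℕ) (z : Fin 2 → ℝ) : ℝ :=
  max 0 (L * (1/2 - Dd τ i z))

lemma bb_nonneg (L : ℝ) (τ : ℕ → Bool) (i : ℕ) (z : Fin 2 → ℝ) :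
    0 ≤ bb L τ i z := le_max_left _ _

lemma bb_eq_zero {L : ℝ} (hL : 0 ≤ L) {τ : ℕ → Bool} {i : ℕ} {z : Fin 2 → ℝ}
    (h : 1/2 ≤ Dd τ i z) : bb L τ i z = 0 :=
  max_eq_left (mul_nonpos_of_nonneg_of_nonpos hL (by linarith))

lemma bb_lip {L : ℝ} (hL : 0 ≤ L) (τ : ℕ → Bool) (i : ℕ) (z z' : Fin 2 → ℝ) :
    bb L τ i z' ≤ bb L τ i z + L * (|z 0 - z' 0| + |z 1 - z' 1|) := by
  have hd : Dd τ i z ≤ Dd τ i z' + (|z 0 - z' 0| + |z 1 - z' 1|) := by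
    have t0 : |z 0 - xc τ i 0| ≤ |z 0 - z' 0| + |z' 0 - xc τ i 0| :=
      abs_sub_le _ _ _
    have t1 : |z 1 - xc τ i 1| ≤ |z 1 - z' 1| + |z' 1 - xc τ i 1| :=
      abs_sub_le _ _ _
    unfold Dd; linarith
  have habs : 0 ≤ |z 0 - z' 0| + |z 1 - z' 1| := by positivity
  apply max_le
  · have := bb_nonneg L τ i z
    nlinarith
  · have : L * (1/2 - Dd τ i z') ≤ L * (1/2 - Dd τ i z) + L * (|z 0 - z' 0| + |z 1 - z' 1|) := by
      nlinarith
    calc L * (1/2 - Dd τ i z') ≤ L * (1/2 - Dd τ i z) + L * (|z 0 - z' 0| + |z 1 - z' 1|) := this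
      _ ≤ bb L τ i z + L * (|z 0 - z' 0| + |z 1 - z' 1|) := by
          have := le_max_right (0:ℝ) (L * (1/2 - Dd τ i z)); unfold bb; linarith


/-- for every `I ≥ 1` and truth assignment `τ` there is `u : ℝ²₊ → ℝ` with
(a) `u z > u z'` whenever `z > z'` componentwise (on the nonnegative orthant), and
(b) `u` represents the relation `B` induced by `τ`: for `i ∈ {1,…,I}`,
`u z¹ᵢ > u z²ᵢ` if `τ i = true`, and `u z²ᵢ > u z¹ᵢ` if `τ i = false`. -/
theorem statement4 (I : ℕ) (hI : 1 ≤ I) (τ : ℕ → Bool) :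
    ∃ u : (Fin 2 → ℝ) → ℝ,
      (∀ z z' : Fin 2 → ℝ, 0 ≤ z' → z' ≤ z → z ≠ z' → u z > u z') ∧
      (∀ i : ℕ, 1 ≤ i → i ≤ I →
        (τ i = true → u (zv 0 i) > u (zv 1 i)) ∧
        (τ i = false → u (zv 1 i) > u (zv 0 i))) := by
  have hI1 : (1:ℝ) ≤ I := by exact_mod_cast hI
  obtain ⟨L, hLdef⟩ : ∃ L : ℝ, L = 1 - 1 / ((I:ℝ) * (2 * I + 1)) := ⟨_, rfl⟩
  have hIpos : (0:ℝ) < (I:ℝ) * (2 * I + 1) := by nlinarith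
  have hL0 : 0 < L := by
    have h3 : (3:ℝ) ≤ (I:ℝ) * (2 * I + 1) := by nlinarith
    have : 1 / ((I:ℝ) * (2 * I + 1)) ≤ 1 / 3 := by
      apply one_div_le_one_div_of_le <;> linarith
    rw [hLdef]; linarith
  have hL1 : L < 1 := by
    have : 0 < 1 / ((I:ℝ) * (2 * I + 1)) := by positivity
    rw [hLdef]; linarith
  have hS : (Finset.Icc 1 I).Nonempty := ⟨1, by simp [hI]⟩
  set w : (Fin 2 → ℝ) → ℝ := fun z => (Finset.Icc 1 I).sup' hS (fun i => bb L τ i z) with hw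
  refine ⟨fun z => z 0 * z 1 + (z 0 + z 1) + w z, ?_, ?_⟩
  · -- monotonicity
    intro z z' hz'0 hle hne
    have hle' : ∀ k, z' k ≤ z k := hle
    have h0' : ∀ k, 0 ≤ z' k := hz'0
    have hd : 0 < (z 0 - z' 0) + (z 1 - z' 1) := by
      by_contra hcon
      push_neg at hcon
      have e0 : z 0 = z' 0 := le_antisymm (by linarith [hle' 0, hle' 1]) (hle' 0)
      have e1 : z 1 = z' 1 := le_antisymm (by linarith [hle' 0, hle' 1]) (hle' 1)
      apply hne
      funext k
      fin_cases k <;> assumption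
    set d : ℝ := (z 0 - z' 0) + (z 1 - z' 1) with hdd
    have habs : |z 0 - z' 0| + |z 1 - z' 1| = d := by
      rw [abs_of_nonneg (by linarith [hle' 0]), abs_of_nonneg (by linarith [hle' 1])]
    have hwle : w z' ≤ w z + L * d := by
      apply Finset.sup'_le
      intro j hj
      have := bb_lip hL0.le τ j z z'
      rw [habs] at this
      have h2 : bb L τ j z ≤ w z := Finset.le_sup' (fun i => bb L τ i z) hj
      linarith
    have hprod : z' 0 * z' 1 ≤ z 0 * z 1 := by
      nlinarith [hle' 0, hle' 1, h0' 0, h0' 1]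
    have : L * d < d := by nlinarith
    show z' 0 * z' 1 + (z' 0 + z' 1) + w z' < z 0 * z 1 + (z 0 + z 1) + w z
    have : z' 0 + z' 1 + d = z 0 + z 1 := by rw [hdd]; ring
    nlinarith [hwle]
  · -- representation
    intro i h1 h2
    have hiS : i ∈ Finset.Icc 1 I := Finset.mem_Icc.mpr ⟨h1, h2⟩
    have hi1 : (1:ℝ) ≤ (i:ℝ) := by exact_mod_cast h1
    have hiI : (i:ℝ) ≤ (I:ℝ) := by exact_mod_cast h2
    have hipos : (0:ℝ) < i := by linarith
    have hi2pos : (0:ℝ) < (i:ℝ) + 1/2 := by linarith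
    -- distance lower bound for non-centered points
    have hDj : ∀ j : ℕ, ∀ q : Fin 2, ((if τ j then (0 : Fin 2) else 1) ≠ q ∨ j ≠ i) →
        1/2 ≤ Dd τ j (zv q i) := by
      intro j q h
      have h1' : 1/2 ≤ |zv q i 0 - xc τ j 0| := by
        unfold xc
        split_ifs with ht
        · apply center_dist
          rcases h with h | h
          · left; simp [ht] at h; exact fun hh => h hh.symm
          · right; exact fun hh => h hh.symm
        · apply center_dist
          rcases h with h | h
          · left; simp [ht] at h; exact fun hh => h hh.symm
          · right; exact fun hh => h hh.symm
      have := abs_nonneg (zv q i 1 - xc τ j 1)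
      unfold Dd; linarith
    -- value of w at the center point
    have hwx : ∀ q : Fin 2, xc τ i = zv q i → w (zv q i) = L / 2 := by
      intro q hxq
      have hDi : Dd τ i (zv q i) = 0 := by
        unfold Dd; rw [hxq]; simp
      have hbi : bb L τ i (zv q i) = L / 2 := by
        unfold bb; rw [hDi]
        rw [max_eq_right (by nlinarith)]; ring
      apply le_antisymm
      · apply Finset.sup'_le
        intro j hj
        by_cases hji : j = i
        · subst hji; rw [hbi]
        · rw [bb_eq_zero hL0.le (hDj j q (Or.inr hji))]; linarith
      · calc L / 2 = bb L τ i (zv q i) := hbi.symm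
          _ ≤ _ := Finset.le_sup' (fun j => bb L τ j (zv q i)) hiS
    -- value of w at the other point
    have hwy : ∀ q : Fin 2, (if τ i then (0 : Fin 2) else 1) ≠ q → w (zv q i) = 0 := by
      intro q hq
      apply le_antisymm
      · apply Finset.sup'_le
        intro j hj
        by_cases hji : j = i
        · subst hji; rw [bb_eq_zero hL0.le (hDj j q (Or.inl hq))]
        · rw [bb_eq_zero hL0.le (hDj j q (Or.inr hji))]
      · calc (0:ℝ) ≤ bb L τ i (zv q i) := bb_nonneg _ _ _ _
          _ ≤ _ := Finset.le_sup' (fun j => bb L τ j (zv q i)) hiS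
    have key1 : 1 / (i:ℝ) - 1 / ((i:ℝ) + 1/2) = 1 / ((i:ℝ) * (2 * i + 1)) := by
      have h0 : (i:ℝ) ≠ 0 := ne_of_gt hipos
      have h2' : (i:ℝ) + 1/2 ≠ 0 := ne_of_gt hi2pos
      have h3' : (i:ℝ) * (2 * i + 1) ≠ 0 := by positivity
      field_simp
      ring
    have hipos2 : (0:ℝ) < (i:ℝ) * (2 * i + 1) := by nlinarith
    have key2 : 1 / ((i:ℝ) * (2 * i + 1)) > 1 / (2 * ((I:ℝ) * (2 * I + 1))) := by
      apply one_div_lt_one_div_of_lt hipos2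
      nlinarith
    constructor
    · intro ht
      have hx : xc τ i = zv 0 i := by simp [xc, ht]
      have hwx0 := hwx 0 hx
      have hwy1 := hwy 1 (by simp only [ht]; decide)
      show (zv 1 i) 0 * (zv 1 i) 1 + ((zv 1 i) 0 + (zv 1 i) 1) + w (zv 1 i)
          < (zv 0 i) 0 * (zv 0 i) 1 + ((zv 0 i) 0 + (zv 0 i) 1) + w (zv 0 i)
      rw [zv00, zv01, zv10, zv11, hwx0, hwy1]
      have e1 : (i:ℝ) * (1 / (i:ℝ)) = 1 := by field_simp
      have e2 : ((i:ℝ) + 1/2) * (1 / ((i:ℝ) + 1/2)) = 1 := by field_simp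
      rw [e1, e2]
      -- goal: 1 + (i + 1/2 + 1/(i+1/2)) + 0 < 1 + (i + 1/i) + L/2
      have : 1 / ((I:ℝ) * (2 * I + 1)) / 2 < 1 / ((i:ℝ) * (2 * i + 1)) := by
        rw [div_div]
        rw [show (I:ℝ) * (2 * I + 1) * 2 = 2 * ((I:ℝ) * (2 * I + 1)) by ring]
        exact key2
      rw [hLdef]
      linarith [key1]
    · intro ht
      have hx : xc τ i = zv 1 i := by simp [xc, ht]
      have hwx1 := hwx 1 hx
      have hwy0 := hwy 0 (by simp only [ht]; decide)
      show (zv 0 i) 0 * (zv 0 i) 1 + ((zv 0 i) 0 + (zv 0 i) 1) + w (zv 0 i)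
          < (zv 1 i) 0 * (zv 1 i) 1 + ((zv 1 i) 0 + (zv 1 i) 1) + w (zv 1 i)
      rw [zv00, zv01, zv10, zv11, hwx1, hwy0]
      have e1 : (i:ℝ) * (1 / (i:ℝ)) = 1 := by field_simp
      have e2 : ((i:ℝ) + 1/2) * (1 / ((i:ℝ) + 1/2)) = 1 := by field_simp
      rw [e1, e2]
      -- goal: 1 + (i + 1/i) + 0 < 1 + (i + 1/2 + 1/(i+1/2)) + L/2
      have hδ : 1 / ((i:ℝ) * (2 * i + 1)) ≤ 1/3 := by
        apply one_div_le_one_div_of_le (by norm_num)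
        nlinarith
      linarith [key1]
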